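/- Let f_1,…,f_n : ℝ^N → ℝ each be μ-strongly convex and L-smooth, and let f = (1/n)Σ_{i=1}^n f_i. For any points y_1,…,y_n ∈ ℝ^N, set ȳ = (1/n)Σ_i y_i, g = (1/n)Σ_i ∇f_i(y_i), and f̂ = (1/n)Σ_i [ f_i(y_i) + ⟨∇f_i(y_i), ȳ − y_i⟩ ]. Then for every ω ∈ ℝ^N: (1) f(ω) ≥ f̂ + ⟨g, ω − ȳ⟩ + (μ/2)‖ω − ȳ‖², and (2) f(ω) ≤ f̂ + ⟨g, ω − ȳ⟩ + L‖ω − ȳ‖² + (L/n)Σ_{i=1}^n ‖y_i − ȳ‖². -/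

import Mathlib

open scoped RealInnerProductSpace
open InnerProductSpace

section aux

variable {N : ℕ}

lemma descent (f : EuclideanSpace ℝ (Fin N) → ℝ) (L : ℝ) (hL : 0 ≤ L)
    (hdiff : Differentiable ℝ f)
    (hsm : ∀ u w, ‖gradient f u - gradient f w‖ ≤ L * ‖u - w‖)
    (u w : EuclideanSpace ℝ (Fin N)) :
    f w ≤ f u + ⟪gradient f u, w - u⟫ + L * ‖w - u‖ ^ 2 := by
  have hfd : ∀ x, fderiv ℝ f x = (toDual ℝ _) (gradient f x) := fun x => by
    rw [gradient, LinearIsometryEquiv.apply_symm_apply]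
  have key : ‖f w - f u - (fderiv ℝ f u) (w - u)‖ ≤ (L * ‖w - u‖) * ‖w - u‖ := by
    apply Convex.norm_image_sub_le_of_norm_hasFDerivWithin_le'
      (f' := fun x => fderiv ℝ f x) (φ := fderiv ℝ f u) ?_ ?_ (convex_segment u w)
      (left_mem_segment ℝ u w) (right_mem_segment ℝ u w)
    · exact fun x _ => ((hdiff x).hasFDerivAt).hasFDerivWithinAt
    · intro x hx
      rw [segment_eq_image'] at hx
      obtain ⟨t, ht, rfl⟩ := hx
      have h1 : ‖u + t • (w - u) - u‖ ≤ ‖w - u‖ := by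
        rw [add_sub_cancel_left, norm_smul, Real.norm_eq_abs, abs_of_nonneg ht.1]
        nlinarith [norm_nonneg (w - u), ht.2]
      calc ‖fderiv ℝ f (u + t • (w - u)) - fderiv ℝ f u‖
          = ‖gradient f (u + t • (w - u)) - gradient f u‖ := by
            rw [hfd, hfd, ← map_sub, LinearIsometryEquiv.norm_map]
        _ ≤ L * ‖u + t • (w - u) - u‖ := hsm _ _
        _ ≤ L * ‖w - u‖ := by nlinarith
  have h2 : (fderiv ℝ f u) (w - u) = ⟪gradient f u, w - u⟫ := by
    rw [hfd, toDual_apply_apply]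
  rw [h2] at key
  have := abs_le.mp (by rwa [Real.norm_eq_abs] at key)
  nlinarith [this.2]

lemma variance (n : ℕ) (y : Fin n → EuclideanSpace ℝ (Fin N))
    (ω ybar : EuclideanSpace ℝ (Fin N)) (hsum : (n : ℝ) • ybar = ∑ i, y i) :
    ∑ i, ‖ω - y i‖ ^ 2 = n * ‖ω - ybar‖ ^ 2 + ∑ i, ‖y i - ybar‖ ^ 2 := by
  have h1 : ∀ i : Fin n, ‖ω - y i‖ ^ 2
      = ‖ω - ybar‖ ^ 2 + 2 * ⟪ω - ybar, ybar - y i⟫ + ‖y i - ybar‖ ^ 2 := by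
    intro i
    have : ω - y i = (ω - ybar) + (ybar - y i) := by abel
    rw [this, @norm_add_sq_real, ← norm_neg (ybar - y i)]
    ring_nf
    rw [neg_sub]
  rw [Finset.sum_congr rfl (fun i _ => h1 i)]
  have hz : (∑ _i : Fin n, ybar) - ∑ i, y i = 0 := by
    rw [← hsum, Finset.sum_const, Finset.card_univ, Fintype.card_fin,
      ← Nat.cast_smul_eq_nsmul ℝ, sub_self]
  rw [Finset.sum_add_distrib, Finset.sum_add_distrib, ← Finset.mul_sum, ← inner_sum,
    Finset.sum_sub_distrib, hz, inner_zero_right, Finset.sum_const, Finset.card_univ,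
    Fintype.card_fin, nsmul_eq_mul]
  ring

end aux

/-- inexact gradient inequalities for the average of `n` μ-strongly convex,
L-smooth functions evaluated at possibly different points `y i`. -/
theorem stmt_3 (n N : ℕ) (hn : 0 < n)
    (f : Fin n → EuclideanSpace ℝ (Fin N) → ℝ)
    (μ L : ℝ) (hμ : 0 < μ) (hμL : μ ≤ L)
    (hdiff : ∀ i, Differentiable ℝ (f i))
    (hsmooth : ∀ i u w, ‖gradient (f i) u - gradient (f i) w‖ ≤ L * ‖u - w‖)
    (hsc : ∀ i u w, f i w ≥ f i u + ⟪gradient (f i) u, w - u⟫ + μ / 2 * ‖w - u‖ ^ 2)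
    (y : Fin n → EuclideanSpace ℝ (Fin N))
    (ybar : EuclideanSpace ℝ (Fin N)) (hybar : ybar = (n : ℝ)⁻¹ • ∑ i, y i)
    (g : EuclideanSpace ℝ (Fin N)) (hg : g = (n : ℝ)⁻¹ • ∑ i, gradient (f i) (y i))
    (fhat : ℝ)
    (hfhat : fhat = (n : ℝ)⁻¹ * ∑ i, (f i (y i) + ⟪gradient (f i) (y i), ybar - y i⟫)) :
    ∀ ω : EuclideanSpace ℝ (Fin N),
      ((n : ℝ)⁻¹ * ∑ i, f i ω ≥ fhat + ⟪g, ω - ybar⟫ + μ / 2 * ‖ω - ybar‖ ^ 2) ∧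
      ((n : ℝ)⁻¹ * ∑ i, f i ω ≤ fhat + ⟪g, ω - ybar⟫ + L * ‖ω - ybar‖ ^ 2
          + L / n * ∑ i, ‖y i - ybar‖ ^ 2) := by
  intro ω
  have hn' : (0:ℝ) < n := Nat.cast_pos.mpr hn
  have hninv : (0:ℝ) ≤ (n:ℝ)⁻¹ := by positivity
  have hL : 0 ≤ L := le_trans hμ.le hμL
  have hsumy : (n : ℝ) • ybar = ∑ i, y i := by
    rw [hybar, smul_smul, mul_inv_cancel₀ (ne_of_gt hn'), one_smul]
  have hvar := variance n y ω ybar hsumy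
  have hginner : ⟪g, ω - ybar⟫ = (n:ℝ)⁻¹ * ∑ i, ⟪gradient (f i) (y i), ω - ybar⟫ := by
    rw [hg, real_inner_smul_left, sum_inner]
  have hdec : ∀ i : Fin n, ⟪gradient (f i) (y i), ω - y i⟫
      = ⟪gradient (f i) (y i), ybar - y i⟫ + ⟪gradient (f i) (y i), ω - ybar⟫ := by
    intro i; rw [← inner_add_right]; congr 1; abel
  set A := ∑ i, f i ω with hA
  set B := ∑ i, (f i (y i) + ⟪gradient (f i) (y i), ybar - y i⟫) with hB
  set C := ∑ i, ⟪gradient (f i) (y i), ω - ybar⟫ with hC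
  set D := ∑ i, ‖ω - y i‖ ^ 2 with hD
  set E := ∑ i, ‖y i - ybar‖ ^ 2 with hE
  have hE0 : 0 ≤ E := Finset.sum_nonneg fun i _ => by positivity
  have hsplit : ∀ (c : ℝ), (∑ i, ((f i (y i) + ⟪gradient (f i) (y i), ybar - y i⟫)
      + ⟪gradient (f i) (y i), ω - ybar⟫ + c * ‖ω - y i‖ ^ 2)) = B + C + c * D := by
    intro c
    rw [Finset.sum_add_distrib, Finset.sum_add_distrib, ← Finset.mul_sum]
  constructor
  · have hlow : A ≥ B + C + μ/2 * D := by
      rw [← hsplit (μ/2)]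
      apply Finset.sum_le_sum
      intro i _
      have h := hsc i (y i) ω
      rw [hdec i] at h
      linarith
    calc fhat + ⟪g, ω - ybar⟫ + μ / 2 * ‖ω - ybar‖ ^ 2
        ≤ fhat + ⟪g, ω - ybar⟫ + μ / 2 * ‖ω - ybar‖ ^ 2 + μ/2 * (n:ℝ)⁻¹ * E := by
          have : 0 ≤ μ/2 * (n:ℝ)⁻¹ * E :=
            mul_nonneg (mul_nonneg (by linarith) hninv) hE0
          linarith
      _ = (n:ℝ)⁻¹ * (B + C + μ/2 * D) := by
          rw [hvar, hfhat, hginner]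
          field_simp
          ring
      _ ≤ (n:ℝ)⁻¹ * A := mul_le_mul_of_nonneg_left hlow hninv
  · have hup : A ≤ B + C + L * D := by
      rw [← hsplit L]
      apply Finset.sum_le_sum
      intro i _
      have h := descent (f i) L hL (hdiff i) (hsmooth i) (y i) ω
      rw [hdec i] at h
      linarith
    calc (n:ℝ)⁻¹ * A ≤ (n:ℝ)⁻¹ * (B + C + L * D) := mul_le_mul_of_nonneg_left hup hninv
      _ = fhat + ⟪g, ω - ybar⟫ + L * ‖ω - ybar‖ ^ 2 + L / n * E := by
          rw [hvar, hfhat, hginner]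
          field_simp
          ring
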